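/- arXiv:1804.04966 — 5 statements merged into one kernel-verified Lean document; each statement's English description precedes it below -/
import Mathlib

section
/- Let n : ℕ, let U and A be real n×n matrices with U symmetric (Uᵀ = U), let Δt > 0 be a real number, and define B := -(U * A). Suppose y₀, y₁ : Fin n → ℝ satisfy the implicit Euler relation y₁ = y₀ + Δt • (A *ᵥ y₁). Then (1/Δt) * (y₁ ⬝ᵥ U *ᵥ y₁) + y₁ ⬝ᵥ B *ᵥ y₁ = (1/Δt) * (y₀ ⬝ᵥ U *ᵥ y₁). -/
open Matrix

theorem implicit_euler_energy_identity (n : ℕ)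
    (U A : Matrix (Fin n) (Fin n) ℝ) (hU : Uᵀ = U)
    (Δt : ℝ) (hΔt : 0 < Δt)
    (B : Matrix (Fin n) (Fin n) ℝ) (hB : B = -(U * A))
    (y₀ y₁ : Fin n → ℝ) (h : y₁ = y₀ + Δt • (A *ᵥ y₁)) :
    (1 / Δt) * (y₁ ⬝ᵥ U *ᵥ y₁) + y₁ ⬝ᵥ B *ᵥ y₁ = (1 / Δt) * (y₀ ⬝ᵥ U *ᵥ y₁) := by
  have hy₀ : y₀ = y₁ - Δt • (A *ᵥ y₁) := eq_sub_iff_add_eq.mpr h.symm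
  have hsym : ∀ v w : Fin n → ℝ, v ⬝ᵥ U *ᵥ w = U *ᵥ v ⬝ᵥ w := by
    intro v w
    rw [dotProduct_mulVec]
    congr 1
    rw [← vecMul_transpose, hU]
  have key : y₁ ⬝ᵥ (U * A) *ᵥ y₁ = (A *ᵥ y₁) ⬝ᵥ U *ᵥ y₁ := by
    rw [← mulVec_mulVec, hsym, dotProduct_comm, hsym]
  rw [hy₀, hB, neg_mulVec, dotProduct_neg, key, sub_dotProduct, smul_dotProduct,
    mul_sub, smul_eq_mul, ← mul_assoc, one_div_mul_cancel hΔt.ne', one_mul]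
  ring
end

section
/- Let n : ℕ, let U and A be real n×n matrices with U symmetric (Uᵀ = U) and positive semidefinite (x ⬝ᵥ U *ᵥ x ≥ 0 for every x), and suppose the matrix B := -(U * A) has nonnegative quadratic form, i.e. x ⬝ᵥ B *ᵥ x ≥ 0 for every x : Fin n → ℝ. Let Δt > 0 and suppose y₀, y₁ : Fin n → ℝ satisfy y₁ = y₀ + Δt • (A *ᵥ y₁). Then y₁ ⬝ᵥ U *ᵥ y₁ ≤ y₀ ⬝ᵥ U *ᵥ y₀. -/
open Matrix

theorem implicit_euler_energy_decay (n : ℕ)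
    (U A : Matrix (Fin n) (Fin n) ℝ) (hU : Uᵀ = U)
    (hpsd : ∀ x : Fin n → ℝ, 0 ≤ x ⬝ᵥ U *ᵥ x)
    (B : Matrix (Fin n) (Fin n) ℝ) (hB : B = -(U * A))
    (hBpos : ∀ x : Fin n → ℝ, 0 ≤ x ⬝ᵥ B *ᵥ x)
    (Δt : ℝ) (hΔt : 0 < Δt)
    (y₀ y₁ : Fin n → ℝ) (h : y₁ = y₀ + Δt • (A *ᵥ y₁)) :
    y₁ ⬝ᵥ U *ᵥ y₁ ≤ y₀ ⬝ᵥ U *ᵥ y₀ := by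
  set z : Fin n → ℝ := A *ᵥ y₁ with hz
  have hy0 : y₀ = y₁ - Δt • z := by
    rw [h]; abel
  have hsym : z ⬝ᵥ U *ᵥ y₁ = y₁ ⬝ᵥ U *ᵥ z := by
    rw [Matrix.dotProduct_mulVec, ← Matrix.mulVec_transpose, hU, dotProduct_comm]
  have hcross : y₁ ⬝ᵥ U *ᵥ z = - (y₁ ⬝ᵥ B *ᵥ y₁) := by
    rw [hB, Matrix.neg_mulVec, dotProduct_neg, neg_neg, ← Matrix.mulVec_mulVec]
  have hexp : y₀ ⬝ᵥ U *ᵥ y₀ =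
      y₁ ⬝ᵥ U *ᵥ y₁ - Δt * (z ⬝ᵥ U *ᵥ y₁) - Δt * (y₁ ⬝ᵥ U *ᵥ z)
        + Δt * Δt * (z ⬝ᵥ U *ᵥ z) := by
    rw [hy0]
    simp [sub_dotProduct, dotProduct_sub, Matrix.mulVec_sub,
      Matrix.mulVec_smul, smul_dotProduct, dotProduct_smul,
      smul_eq_mul]
    ring
  have h1 := hBpos y₁
  have h2 := hpsd z
  nlinarith [mul_pos hΔt hΔt, mul_nonneg hΔt.le h1, mul_nonneg (mul_pos hΔt hΔt).le h2]
end

section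
/- Let n : ℕ, let U and A be real n×n matrices with U symmetric (Uᵀ = U) and positive semidefinite (x ⬝ᵥ U *ᵥ x ≥ 0 for every x), and suppose the matrix B := -(U * A) has nonnegative quadratic form, i.e. x ⬝ᵥ B *ᵥ x ≥ 0 for every x : Fin n → ℝ. Let Δt > 0 and let y : ℕ → (Fin n → ℝ) be a sequence satisfying, for every k : ℕ, the implicit Euler relation y (k+1) = y k + Δt • (A *ᵥ y (k+1)). Then for every k : ℕ, y k ⬝ᵥ U *ᵥ y k ≤ y 0 ⬝ᵥ U *ᵥ y 0. In particular, the scheme is unconditionally stable: the energy bound holds for every time step size Δt > 0. -/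
open Matrix

theorem implicit_euler_unconditional_stability (n : ℕ)
    (U A : Matrix (Fin n) (Fin n) ℝ) (hU : Uᵀ = U)
    (hpsd : ∀ x : Fin n → ℝ, 0 ≤ x ⬝ᵥ U *ᵥ x)
    (B : Matrix (Fin n) (Fin n) ℝ) (hB : B = -(U * A))
    (hBpos : ∀ x : Fin n → ℝ, 0 ≤ x ⬝ᵥ B *ᵥ x)
    (Δt : ℝ) (hΔt : 0 < Δt)
    (y : ℕ → (Fin n → ℝ))
    (h : ∀ k : ℕ, y (k + 1) = y k + Δt • (A *ᵥ y (k + 1))) :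
    ∀ k : ℕ, y k ⬝ᵥ U *ᵥ y k ≤ y 0 ⬝ᵥ U *ᵥ y 0 := by
  have hsym : ∀ a b : Fin n → ℝ, a ⬝ᵥ U *ᵥ b = b ⬝ᵥ U *ᵥ a := by
    intro a b
    rw [dotProduct_mulVec, ← hU, ← mulVec_transpose, hU, dotProduct_comm, hU]
  have key : ∀ k, y (k+1) ⬝ᵥ U *ᵥ y (k+1) ≤ y k ⬝ᵥ U *ᵥ y k := by
    intro k
    set v := y (k+1) with hv
    have hw : y k = v - Δt • (A *ᵥ v) := eq_sub_of_add_eq (h k).symm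
    have hB1 : 0 ≤ -(v ⬝ᵥ U *ᵥ (A *ᵥ v)) := by
      have := hBpos v
      rw [hB, neg_mulVec, dotProduct_neg, ← mulVec_mulVec] at this
      exact this
    have hU2 : 0 ≤ (A *ᵥ v) ⬝ᵥ U *ᵥ (A *ᵥ v) := hpsd _
    rw [hw]
    rw [mulVec_sub, mulVec_smul, dotProduct_sub, sub_dotProduct, sub_dotProduct,
      smul_dotProduct, dotProduct_smul, dotProduct_smul]
    rw [hsym (A *ᵥ v) v]
    simp only [smul_dotProduct, smul_eq_mul]
    nlinarith [mul_nonneg hΔt.le hB1, mul_nonneg (mul_nonneg hΔt.le hΔt.le) hU2]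
  intro k
  induction k with
  | zero => exact le_refl _
  | succ k ih => exact (key k).trans ih
end

section
/- Let R, C, Δt be positive real numbers and let P, π₀ be real numbers. Suppose π is a real number satisfying the implicit Euler relation π = π₀ + (Δt/(R*C)) * (P - π), and set Q := (P - π)/R. Then C * π^2 + 2 * Δt * R * Q^2 ≤ C * π₀^2 + 2 * Δt * P * Q. -/
theorem implicit_euler_RC_energy_inequality
    (R C Δt : ℝ) (hR : 0 < R) (hC : 0 < C) (hΔt : 0 < Δt)
    (P π₀ π : ℝ)
    (hstep : π = π₀ + (Δt / (R * C)) * (P - π))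
    (Q : ℝ) (hQ : Q = (P - π) / R) :
    C * π ^ 2 + 2 * Δt * R * Q ^ 2 ≤ C * π₀ ^ 2 + 2 * Δt * P * Q := by
  have hRQ : P - π = R * Q := by rw [hQ]; field_simp
  have h1 : C * (π - π₀) = Δt * Q := by
    have := hstep
    field_simp [hRQ] at this ⊢
    nlinarith [this]
  have h2 : C * (π - π₀) * (π + π₀) = Δt * Q * (π + π₀) := by rw [h1]
  have h3 : C * (π - π₀) * (Δt * Q) = Δt * Q * (Δt * Q) := by rw [h1]
  have h4 : Δt * ((P - π) * Q) = Δt * (R * Q * Q) := by rw [hRQ]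
  nlinarith [h2, h3, h4, sq_nonneg (Δt * Q), hC, mul_pos hΔt hC]
end

section
/- Let Lc, Rc, H be positive real numbers, let V0, s0, s1, ω, a0, a1, k, L, R1, R2 be real numbers, and define: s t = s0 + s1 * Real.sin (ω * t); 𝒫 x = a0 + a1 * Real.exp (-k * x); Q1 t = (V0 * H / 2) * s t and Q2 t = -(V0 * H / 2) * s t; P1 t = s t * 𝒫 L and P2 t = s t * 𝒫 0; π1 t = P1 t - R1 * Q1 t and π2 t = P2 t - R2 * Q2 t; 𝒞 = (𝒫 L - 𝒫 0 - (R1 + R2) * (V0 * H / 2)) / Rc; Λ1 = s0 * 𝒞, Λ2 = s1 * 𝒞 / ((ω * Lc / Rc)^2 + 1), Λ3 = -(ω * Λ2 * Lc / Rc); and ω11 t = Λ1 + Λ2 * Real.sin (ω * t) + Λ3 * Real.cos (ω * t). Then for every t : ℝ, Lc * deriv ω11 t = π1 t - π2 t - Rc * ω11 t. -/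
theorem example3_circuit_ode
    (Lc Rc H : ℝ) (hLc : 0 < Lc) (hRc : 0 < Rc) (hH : 0 < H)
    (V0 s0 s1 ω a0 a1 k L R1 R2 : ℝ)
    (s : ℝ → ℝ) (hs : ∀ t, s t = s0 + s1 * Real.sin (ω * t))
    (Pscr : ℝ → ℝ) (hPscr : ∀ x, Pscr x = a0 + a1 * Real.exp (-k * x))
    (Q1 Q2 P1 P2 π1 π2 : ℝ → ℝ)
    (hQ1 : ∀ t, Q1 t = (V0 * H / 2) * s t)
    (hQ2 : ∀ t, Q2 t = -(V0 * H / 2) * s t)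
    (hP1 : ∀ t, P1 t = s t * Pscr L)
    (hP2 : ∀ t, P2 t = s t * Pscr 0)
    (hπ1 : ∀ t, π1 t = P1 t - R1 * Q1 t)
    (hπ2 : ∀ t, π2 t = P2 t - R2 * Q2 t)
    (𝒞 Λ1 Λ2 Λ3 : ℝ)
    (h𝒞 : 𝒞 = (Pscr L - Pscr 0 - (R1 + R2) * (V0 * H / 2)) / Rc)
    (hΛ1 : Λ1 = s0 * 𝒞)
    (hΛ2 : Λ2 = s1 * 𝒞 / ((ω * Lc / Rc) ^ 2 + 1))
    (hΛ3 : Λ3 = -(ω * Λ2 * Lc / Rc))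
    (ω11 : ℝ → ℝ)
    (hω11 : ∀ t, ω11 t = Λ1 + Λ2 * Real.sin (ω * t) + Λ3 * Real.cos (ω * t)) :
    ∀ t : ℝ, Lc * deriv ω11 t = π1 t - π2 t - Rc * ω11 t := by
  intro t
  have hfun : ω11 = fun t => Λ1 + Λ2 * Real.sin (ω * t) + Λ3 * Real.cos (ω * t) :=
    funext hω11
  have hd : HasDerivAt ω11 (Λ2 * (Real.cos (ω * t) * ω) + Λ3 * (-Real.sin (ω * t) * ω)) t := by
    rw [hfun]
    have h1 : HasDerivAt (fun t : ℝ => ω * t) ω t := by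
      simpa using (hasDerivAt_id t).const_mul ω
    have hsin := (Real.hasDerivAt_sin (ω * t)).comp t h1
    have hcos := (Real.hasDerivAt_cos (ω * t)).comp t h1
    exact ((hsin.const_mul Λ2).const_add Λ1).add (hcos.const_mul Λ3)
  rw [hd.deriv, hπ1 t, hπ2 t, hP1 t, hP2 t, hQ1 t, hQ2 t, hω11 t, hs t, hΛ1, hΛ3, hΛ2, h𝒞]
  have h1 : (ω * Lc / Rc) ^ 2 + 1 > 0 := by positivity
  field_simp
  ring
end
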